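/- Every free ultrafilter on ω that is a Q-point is a T-point. -/

import Mathlib

def IsEntourage (E : Set (ℕ × ℕ)) : Prop := SetRel.id ⊆ E

def entComp (E F : Set (ℕ × ℕ)) : Set (ℕ × ℕ) :=
  {p | ∃ y, (p.1, y) ∈ E ∧ (y, p.2) ∈ F}

def entInv (E : Set (ℕ × ℕ)) : Set (ℕ × ℕ) := {p | (p.2, p.1) ∈ E}

def entBall (E : Set (ℕ × ℕ)) (x : ℕ) : Set ℕ := {y | (x, y) ∈ E}

def IsCellularEnt (E : Set (ℕ × ℕ)) : Prop := entInv E = E ∧ entComp E E = E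

def IsLocallyFiniteEnt (E : Set (ℕ × ℕ)) : Prop :=
  ∀ x : ℕ, (entBall E x ∪ entBall (entInv E) x).Finite

def IsFinitaryEnt (E : Set (ℕ × ℕ)) : Prop :=
  ∃ n : ℕ, ∀ x : ℕ, (entBall E x ∪ entBall (entInv E) x).Finite ∧
    (entBall E x ∪ entBall (entInv E) x).ncard ≤ n

/-- A free ultrafilter contains no finite set. -/
def IsFreeUF (𝒰 : Ultrafilter ℕ) : Prop := ∀ A : Set ℕ, A.Finite → A ∉ 𝒰

/-- `𝒰` is a Q-point. -/
def IsQPoint (𝒰 : Ultrafilter ℕ) : Prop :=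
  ∀ E : Set (ℕ × ℕ), IsEntourage E → IsLocallyFiniteEnt E → IsCellularEnt E →
    ∃ U ∈ 𝒰, ∀ x : ℕ, (U ∩ entBall E x).Subsingleton

/-- `𝒰` is a T-point. -/
def IsTPoint (𝒰 : Ultrafilter ℕ) : Prop :=
  ∀ E : ℕ → Set (ℕ × ℕ), (∀ n, IsEntourage (E n) ∧ IsFinitaryEnt (E n)) →
    Monotone E →
    ∃ U ∈ 𝒰, ∀ n : ℕ, {x ∈ U | U ∩ entBall (E n) x ≠ {x}}.Finite

theorem qPoint_isTPoint (𝒰 : Ultrafilter ℕ) (hfree : IsFreeUF 𝒰)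
    (hQ : IsQPoint 𝒰) : IsTPoint 𝒰 := by
  classical
  intro E hE hmono
  set S : ℕ → ℕ → Set ℕ := fun n x => entBall (E n) x ∪ entBall (entInv (E n)) x with hS
  have hSfin : ∀ n x, (S n x).Finite := by
    intro n x
    obtain ⟨N, hN⟩ := (hE n).2
    exact (hN x).1
  have hSsymm : ∀ n x y, y ∈ S n x → x ∈ S n y := by
    intro n x y hy
    rcases hy with h | h
    · exact Or.inr h
    · exact Or.inl h
  have hrefl : ∀ n x, x ∈ entBall (E n) x := by
    intro n x
    exact (hE n).1 (show ((x, x) : ℕ × ℕ).1 = ((x, x) : ℕ × ℕ).2 from rfl)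
  have key : ∀ k a, ∃ b, a < b ∧ ∀ x ≤ a, ∀ n ≤ k, ∀ y ∈ S n x, y ≤ b := by
    intro k a
    have hfin : (⋃ x ∈ Set.Iic a, ⋃ n ∈ Set.Iic k, S n x).Finite :=
      (Set.finite_Iic a).biUnion fun x _ => (Set.finite_Iic k).biUnion fun n _ => hSfin n x
    obtain ⟨b, hb⟩ := hfin.bddAbove
    refine ⟨max (a + 1) b, lt_of_lt_of_le (Nat.lt_succ_self a) (le_max_left _ _), ?_⟩
    intro x hx n hn y hy
    have hmem : y ∈ ⋃ x ∈ Set.Iic a, ⋃ n ∈ Set.Iic k, S n x := by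
      refine Set.mem_biUnion hx ?_
      exact Set.mem_biUnion hn hy
    exact le_trans (hb hmem) (le_max_right _ _)
  choose B hB1 hB2 using key
  let m : ℕ → ℕ := fun k => Nat.rec 0 (fun k mk => B (k + 3) mk) k
  have hm_succ : ∀ k, m (k + 1) = B (k + 3) (m k) := fun k => rfl
  have hm_lt : ∀ k, m k < m (k + 1) := fun k => hB1 (k + 3) (m k)
  have hm_mono : Monotone m := monotone_nat_of_le_succ fun k => (hm_lt k).le
  have hm_ball : ∀ k x, x ≤ m k → ∀ n ≤ k + 3, ∀ y ∈ S n x, y ≤ m (k + 1) := by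
    intro k x hx n hn y hy
    rw [hm_succ]
    exact hB2 (k + 3) (m k) x hx n hn y hy
  have hmk : ∀ k, k ≤ m k := by
    intro k
    induction k with
    | zero => exact Nat.zero_le _
    | succ k ih => have := hm_lt k; omega
  have hex : ∀ x, ∃ k, x ≤ m k := fun x => ⟨x, hmk x⟩
  have hcc : ∀ x : ℕ, ∃ k, x ≤ m k ∧ ∀ j, x ≤ m j → k ≤ j := by
    intro x
    have inst : DecidablePred fun k : ℕ => x ≤ m k := fun k => Nat.decLe _ _
    exact ⟨@Nat.find _ inst (hex x), @Nat.find_spec _ inst (hex x),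
      fun j hj => @Nat.find_min' _ inst (hex x) j hj⟩
  choose c hc1 hc2 using hcc
  have L : ∀ n x y, n ≤ c x → y ∈ S n x → c y ≤ c x + 1 ∧ c x ≤ c y + 1 := by
    intro n x y hn hy
    constructor
    · exact hc2 y _ (hm_ball (c x) x (hc1 x) n (by omega) y hy)
    · by_contra h
      push_neg at h
      have hcx2 : 2 ≤ c x := by omega
      have hy' : y ≤ m (c x - 2) := le_trans (hc1 y) (hm_mono (by omega))
      have hx' : x ≤ m (c x - 2 + 1) :=
        hm_ball (c x - 2) y hy' n (by omega) x (hSsymm n x y hy)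
      have := hc2 x (c x - 2 + 1) hx'
      omega
  have mkQ : ∀ g : ℕ → ℕ, (∀ j k, g j = g k → j ≤ k + 1) →
      ∃ U ∈ 𝒰, ∀ x, (U ∩ entBall {p : ℕ × ℕ | g (c p.1) = g (c p.2)} x).Subsingleton := by
    intro g hg
    apply hQ
    · intro p hp
      have h1 : p.1 = p.2 := hp
      show g (c p.1) = g (c p.2)
      rw [h1]
    · intro x
      apply Set.Finite.subset (Set.finite_Iic (m (c x + 1)))
      intro y hy
      have hcy : c y ≤ c x + 1 := by
        rcases hy with h | h
        · exact hg _ _ (h : g (c x) = g (c y)).symm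
        · exact hg _ _ (h : g (c y) = g (c x))
      exact le_trans (hc1 y) (hm_mono hcy)
    · constructor
      · ext p
        exact eq_comm
      · ext p
        constructor
        · rintro ⟨y, h1, h2⟩
          exact (h1 : g (c p.1) = g (c y)).trans h2
        · intro h
          exact ⟨p.1, rfl, h⟩
  obtain ⟨U₁, hU₁, hsel₁⟩ := mkQ (fun k => k / 2) (by intro j k h; omega)
  obtain ⟨U₂, hU₂, hsel₂⟩ := mkQ (fun k => (k + 1) / 2) (by intro j k h; omega)
  refine ⟨U₁ ∩ U₂, Filter.inter_mem hU₁ hU₂, ?_⟩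
  intro n
  apply Set.Finite.subset (Set.finite_Iic (m n))
  intro x hx
  simp only [Set.mem_sep_iff] at hx
  refine Classical.byContradiction fun hxm => ?_
  simp only [Set.mem_Iic, not_le] at hxm
  apply hx.2
  have hcx : n ≤ c x := by
    by_contra h
    push_neg at h
    have h1 := hm_mono (show c x ≤ n by omega)
    have h2 := hc1 x
    omega
  apply Set.eq_singleton_iff_unique_mem.mpr
  refine ⟨⟨hx.1, hrefl n x⟩, ?_⟩
  rintro y ⟨hyU, hyB⟩
  have hyS : y ∈ S n x := Or.inl hyB
  have hL := L n x y hcx hyS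
  have hdiv : c x / 2 = c y / 2 ∨ (c x + 1) / 2 = (c y + 1) / 2 := by omega
  rcases hdiv with h | h
  · exact hsel₁ x ⟨hyU.1, h⟩ ⟨hx.1.1, rfl⟩
  · exact hsel₂ x ⟨hyU.2, h⟩ ⟨hx.1.2, rfl⟩
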